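/- In the cycle convexity, if G2 is a finite graph and c is the size of its smallest connected component, then the convexity number of the join of a single vertex v with G2 equals max(α(G2), |V(G2)| − c + 1). -/

import Mathlib

open SimpleGraph Set

variable {V : Type*}

/-- The interval function of the cycle convexity: `S` together with all vertices `u` such that
the subgraph induced by `S ∪ {u}` has a cycle containing `u`. -/
def cycInt (G : SimpleGraph V) (S : Set V) : Set V :=
  S ∪ {u | ∃ w : G.Walk u u, w.IsCycle ∧ ∀ x ∈ w.support, x ∈ S ∪ {u}}

/-- The convex hull in the cycle convexity, obtained by iterating `cycInt`. -/
def cycHull (G : SimpleGraph V) (S : Set V) : Set V :=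
  ⋃ k, (cycInt G)^[k] S

/-- A set is convex in the cycle convexity iff it is a fixed point of the interval function. -/
def CycConvex (G : SimpleGraph V) (S : Set V) : Prop := cycInt G S = S

/-- A hull set: a set whose convex hull is the whole vertex set. -/
def IsHullSet (G : SimpleGraph V) (S : Set V) : Prop := cycHull G S = Set.univ

/-- The convexity number: the largest cardinality of a convex set different from `V(G)`. -/
noncomputable def conNum (G : SimpleGraph V) : ℕ :=
  sSup {n | ∃ S : Set V, CycConvex G S ∧ S ≠ Set.univ ∧ S.ncard = n}

/-- The percolation time: the largest `k > 0` such that some hull set `S` satisfies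
`I^[k-1] S ≠ V(G)`; `0` if no such `k` exists. -/
noncomputable def percTime (G : SimpleGraph V) : ℕ :=
  sSup {k | 0 < k ∧ ∃ S : Set V, IsHullSet G S ∧ (cycInt G)^[k-1] S ≠ Set.univ}

/-- A set is convexly independent if no element lies in the hull of the others. -/
def ConvIndep (G : SimpleGraph V) (S : Set V) : Prop :=
  ∀ v ∈ S, v ∉ cycHull G (S \ {v})

/-- The independence number (as a supremum of cardinalities of independent sets). -/
noncomputable def alphaNum (G : SimpleGraph V) : ℕ :=
  sSup {n | ∃ S : Set V, S.Pairwise (fun a b => ¬ G.Adj a b) ∧ S.ncard = n}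

/-- The join of two graphs: their disjoint union together with all edges between the parts. -/
def joinGraph {V1 V2 : Type*} (G1 : SimpleGraph V1) (G2 : SimpleGraph V2) :
    SimpleGraph (V1 ⊕ V2) where
  Adj x y :=
    (∃ a b, x = Sum.inl a ∧ y = Sum.inl b ∧ G1.Adj a b) ∨
    (∃ a b, x = Sum.inr a ∧ y = Sum.inr b ∧ G2.Adj a b) ∨
    (∃ a b, x = Sum.inl a ∧ y = Sum.inr b) ∨
    (∃ a b, x = Sum.inr a ∧ y = Sum.inl b)
  symm := by
    constructor
    rintro x y (⟨a,b,rfl,rfl,h⟩|⟨a,b,rfl,rfl,h⟩|⟨a,b,rfl,rfl⟩|⟨a,b,rfl,rfl⟩)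
    · exact Or.inl ⟨b, a, rfl, rfl, h.symm⟩
    · exact Or.inr (Or.inl ⟨b, a, rfl, rfl, h.symm⟩)
    · exact Or.inr (Or.inr (Or.inr ⟨b, a, rfl, rfl⟩))
    · exact Or.inr (Or.inr (Or.inl ⟨b, a, rfl, rfl⟩))
  loopless := by
    constructor
    rintro x (⟨a,b,rfl,h,hadj⟩|⟨a,b,rfl,h,hadj⟩|⟨a,b,rfl,h⟩|⟨a,b,rfl,h⟩) <;>
      simp_all

/- ### Auxiliary lemmas -/

lemma cycle_struct {W : Type*} {G : SimpleGraph W} {u : W} {w : G.Walk u u}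
    (hw : w.IsCycle) :
    ∃ a b d : W, G.Adj u a ∧ G.Adj a b ∧ G.Adj u d ∧ a ≠ u ∧ b ≠ u ∧ a ≠ d ∧
      a ∈ w.support ∧ b ∈ w.support ∧ d ∈ w.support := by
  have hlen := hw.three_le_length
  cases w with
  | nil => exact absurd rfl hw.ne_nil
  | @cons _ a1 _ h1 q =>
    rw [Walk.cons_isCycle_iff] at hw
    obtain ⟨hq, -⟩ := hw
    have hqlen : 2 ≤ q.length := by simp at hlen; omega
    cases q with
    | nil => simp at hqlen
    | @cons _ b _ h2 r =>
      have hrp : r.IsPath := hq.of_cons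
      have ha1r : a1 ∉ r.support := by
        have := (Walk.cons_isPath_iff h2 r).mp hq
        exact this.2
      have hrd : r.darts ≠ [] := by
        intro h
        have : r.length = 0 := by
          have := congrArg List.length h
          simpa using this
        simp [this] at hqlen
      have hbu : b ≠ u := by
        intro h
        subst h
        rw [Walk.isPath_iff_eq_nil] at hrp
        subst hrp
        simp at hrd
      set d : G.Dart := r.darts.getLast hrd with hd
      have hds : d.snd = u := by rw [hd, Walk.getLast_darts_eq_lastDart]; rfl
      have hdadj : G.Adj d.fst u := hds ▸ d.adj
      have hdmem : d.fst ∈ r.support :=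
        Walk.dart_fst_mem_support_of_mem_darts _ (List.getLast_mem hrd)
      refine ⟨a1, b, d.fst, h1, h2, hdadj.symm, h1.ne', hbu, ?_, ?_, ?_, ?_⟩
      · intro h; rw [h] at ha1r; exact ha1r hdmem
      · simp
      · simp [Walk.support_cons]
      · simp only [Walk.support_cons, List.mem_cons]
        exact Or.inr (Or.inr hdmem)

lemma triangle_isCycle {W : Type*} {G : SimpleGraph W} {p q r : W}
    (hpq : G.Adj p q) (hqr : G.Adj q r) (hrp : G.Adj r p) :
    (Walk.cons hpq (Walk.cons hqr (Walk.cons hrp Walk.nil))).IsCycle := by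
  rw [Walk.cons_isCycle_iff]
  constructor
  · simp [Walk.isPath_def, hqr.ne, hrp.ne, hpq.ne']
  · simp [Sym2.eq_iff]
    push_neg
    exact ⟨⟨fun _ => hqr.ne, hrp.ne'⟩, fun _ => hpq.ne', hqr.ne⟩

lemma cycConvex_iff {G : SimpleGraph V} {S : Set V} :
    CycConvex G S ↔
      ∀ u, (∃ w : G.Walk u u, w.IsCycle ∧ ∀ x ∈ w.support, x ∈ S ∪ {u}) → u ∈ S := by
  unfold CycConvex cycInt
  rw [Set.union_eq_left]
  exact Iff.rfl

section Join

variable {V2 : Type*} (G2 : SimpleGraph V2)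

lemma adj_inr_inr (a b : V2) :
    (joinGraph (⊥ : SimpleGraph Unit) G2).Adj (Sum.inr a) (Sum.inr b) ↔ G2.Adj a b := by
  simp [joinGraph]

lemma adj_inl_inr (x : Unit) (b : V2) :
    (joinGraph (⊥ : SimpleGraph Unit) G2).Adj (Sum.inl x) (Sum.inr b) := by
  simp [joinGraph]

lemma adj_inl_inl (x y : Unit) :
    ¬ (joinGraph (⊥ : SimpleGraph Unit) G2).Adj (Sum.inl x) (Sum.inl y) := by
  simp [joinGraph]

variable {G2}

/-- independent sets of `G2` give convex sets avoiding the apex. -/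
lemma conv_of_indep {T : Set V2} (hT : T.Pairwise (fun a b => ¬ G2.Adj a b)) :
    CycConvex (joinGraph (⊥ : SimpleGraph Unit) G2) (Sum.inr '' T) := by
  rw [cycConvex_iff]
  rintro u ⟨w, hw, hsupp⟩
  obtain ⟨a, b, d, hua, hab, -, hau, hbu, -, has, hbs, -⟩ := cycle_struct hw
  have haS : a ∈ Sum.inr '' T := by
    rcases hsupp a has with h | h
    · exact h
    · exact absurd h hau
  have hbS : b ∈ Sum.inr '' T := by
    rcases hsupp b hbs with h | h
    · exact h
    · exact absurd h hbu
  obtain ⟨a0, ha0, rfl⟩ := haS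
  obtain ⟨b0, hb0, rfl⟩ := hbS
  rw [adj_inr_inr] at hab
  exact absurd hab (hT ha0 hb0 (fun h => hab.ne (by rw [h])))

/-- sets closed under `G2`-adjacency together with the apex give convex sets. -/
lemma conv_of_closed {T : Set V2} (hT : ∀ a b, G2.Adj a b → a ∈ T → b ∈ T) :
    CycConvex (joinGraph (⊥ : SimpleGraph Unit) G2) ({Sum.inl ()} ∪ Sum.inr '' T) := by
  rw [cycConvex_iff]
  rintro u ⟨w, hw, hsupp⟩
  by_contra hu
  obtain ⟨a, b, d, hua, -, hud, hau, -, had, has, -, hds⟩ := cycle_struct hw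
  -- u is an inr vertex
  obtain ⟨x, rfl⟩ : ∃ x, u = Sum.inr x := by
    cases u with
    | inl t => exact absurd (Or.inl rfl) hu
    | inr x => exact ⟨x, rfl⟩
  have haS : a ∈ ({Sum.inl ()} ∪ Sum.inr '' T : Set (Unit ⊕ V2)) := by
    rcases hsupp a has with h | h
    · exact h
    · exact absurd h hau
  have hdS : d ∈ ({Sum.inl ()} ∪ Sum.inr '' T : Set (Unit ⊕ V2)) := by
    rcases hsupp d hds with h | h
    · exact h
    · exact absurd h (fun hh => (hh ▸ hud).ne rfl)
  -- one of a, d is an inr vertex in T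
  have key : ∃ a0 ∈ T, G2.Adj x a0 := by
    rcases haS with h | ⟨a0, ha0, rfl⟩
    · rcases hdS with h' | ⟨d0, hd0, rfl⟩
      · exact absurd (by rw [Set.mem_singleton_iff] at h h'; rw [h, h']) had
      · exact ⟨d0, hd0, (adj_inr_inr G2 x d0).mp hud⟩
    · exact ⟨a0, ha0, (adj_inr_inr G2 x a0).mp hua⟩
  obtain ⟨a0, ha0, hxa⟩ := key
  exact hu (Or.inr ⟨x, hT a0 x hxa.symm ha0, rfl⟩)

/-- convex set avoiding the apex: its trace on `V2` is independent. -/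
lemma indep_of_conv {S : Set (Unit ⊕ V2)}
    (hS : CycConvex (joinGraph (⊥ : SimpleGraph Unit) G2) S) (hv : Sum.inl () ∉ S) :
    {a | Sum.inr a ∈ S}.Pairwise (fun a b => ¬ G2.Adj a b) := by
  intro a ha b hb hab hadj
  rw [cycConvex_iff] at hS
  apply hv
  refine hS _ ⟨Walk.cons (adj_inl_inr G2 () a)
    (Walk.cons ((adj_inr_inr G2 a b).mpr hadj)
    (Walk.cons (((adj_inl_inr G2 () b)).symm) Walk.nil)), triangle_isCycle _ _ _, ?_⟩
  intro x hx
  simp only [Walk.support_cons, Walk.support_nil, List.mem_cons, List.mem_singleton] at hx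
  rcases hx with rfl | rfl | rfl | rfl | h
  · exact Or.inr rfl
  · exact Or.inl ha
  · exact Or.inl hb
  · exact Or.inr rfl
  · simp at h

/-- convex set containing the apex: its trace on `V2` is closed under adjacency. -/
lemma closed_of_conv {S : Set (Unit ⊕ V2)}
    (hS : CycConvex (joinGraph (⊥ : SimpleGraph Unit) G2) S) (hv : Sum.inl () ∈ S)
    {a b : V2} (hadj : G2.Adj a b) (haS : Sum.inr a ∈ S) : Sum.inr b ∈ S := by
  rw [cycConvex_iff] at hS
  refine hS _ ⟨Walk.cons ((adj_inr_inr G2 b a).mpr hadj.symm)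
    (Walk.cons ((adj_inl_inr G2 () a).symm)
    (Walk.cons (adj_inl_inr G2 () b) Walk.nil)), triangle_isCycle _ _ _, ?_⟩
  intro x hx
  simp only [Walk.support_cons, Walk.support_nil, List.mem_cons, List.mem_singleton] at hx
  rcases hx with rfl | rfl | rfl | rfl | h
  · exact Or.inr rfl
  · exact Or.inl haS
  · exact Or.inl hv
  · exact Or.inr rfl
  · simp at h

end Join

theorem stmt_4 {V2 : Type*} [Fintype V2] [Nonempty V2] (G2 : SimpleGraph V2) (c : ℕ)
    (hc : IsLeast {n | ∃ K : G2.ConnectedComponent, n = K.supp.ncard} c) :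
    conNum (joinGraph (⊥ : SimpleGraph Unit) G2) =
      max (alphaNum G2) (Fintype.card V2 - c + 1) := by
  classical
  set G := joinGraph (⊥ : SimpleGraph Unit) G2 with hG
  set A := {n | ∃ S : Set (Unit ⊕ V2), CycConvex G S ∧ S ≠ Set.univ ∧ S.ncard = n} with hA
  set B := {n | ∃ S : Set V2, S.Pairwise (fun a b => ¬ G2.Adj a b) ∧ S.ncard = n} with hB
  have hbddA : BddAbove A := by
    refine ⟨Fintype.card (Unit ⊕ V2), ?_⟩
    rintro n ⟨S, -, -, rfl⟩
    have := Set.ncard_le_ncard (Set.subset_univ S) Set.finite_univ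
    simpa [Set.ncard_univ, Nat.card_eq_fintype_card] using this
  have hbddB : BddAbove B := by
    refine ⟨Fintype.card V2, ?_⟩
    rintro n ⟨S, -, rfl⟩
    have := Set.ncard_le_ncard (Set.subset_univ S) Set.finite_univ
    simpa [Set.ncard_univ, Nat.card_eq_fintype_card] using this
  have hcompl : ∀ (T : Set V2), T.ncard + Tᶜ.ncard = Fintype.card V2 := by
    intro T
    rw [← Nat.card_eq_fintype_card]
    exact Set.ncard_add_ncard_compl T
  obtain ⟨K0, hK0⟩ := hc.1
  show sSup A = _
  apply le_antisymm
  · apply csSup_le'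
    rintro n ⟨S, hconv, hproper, rfl⟩
    by_cases hv : (Sum.inl () : Unit ⊕ V2) ∈ S
    · -- S contains the apex; its trace is closed under adjacency
      set T := Sum.inr ⁻¹' S with hT
      have hclosed : ∀ a b, G2.Adj a b → a ∈ T → b ∈ T := fun a b hab ha =>
        closed_of_conv hconv hv hab ha
      have hSrepr : S = {Sum.inl ()} ∪ Sum.inr '' T := by
        ext u
        cases u with
        | inl t => cases t; simp [hv]
        | inr x => simp [hT]
      obtain ⟨u, hu⟩ : ∃ u, u ∉ S := by
        by_contra h; push_neg at h; exact hproper (Set.eq_univ_of_forall h)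
      obtain ⟨x, rfl⟩ : ∃ x, u = Sum.inr x := by
        cases u with
        | inl t => cases t; exact absurd hv hu
        | inr x => exact ⟨x, rfl⟩
      have hreachT : ∀ {y z : V2}, G2.Walk y z → y ∈ T → z ∈ T := by
        intro y z w
        induction w with
        | nil => exact id
        | cons h p ih => intro hy; exact ih (hclosed _ _ h hy)
      have hxT : x ∉ T := hu
      have hKsub : T ⊆ ((G2.connectedComponentMk x).supp)ᶜ := by
        intro y hyT hyK
        rw [ConnectedComponent.mem_supp_iff] at hyK
        obtain ⟨p⟩ := ConnectedComponent.exact hyK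
        exact hxT (hreachT p hyT)
      have hc_le : c ≤ (G2.connectedComponentMk x).supp.ncard := hc.2 ⟨_, rfl⟩
      have h1 := hcompl (G2.connectedComponentMk x).supp
      have hT_le : T.ncard ≤ ((G2.connectedComponentMk x).supp)ᶜ.ncard :=
        Set.ncard_le_ncard hKsub (Set.toFinite _)
      have hdisj : Disjoint ({Sum.inl ()} : Set (Unit ⊕ V2)) (Sum.inr '' T) := by
        simp [Set.disjoint_left]
      have hS_card : S.ncard = T.ncard + 1 := by
        rw [hSrepr, Set.ncard_union_eq hdisj (Set.toFinite _) (Set.toFinite _),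
          Set.ncard_singleton, Set.ncard_image_of_injective _ Sum.inr_injective]
        omega
      rw [hS_card]
      exact le_trans (by omega) (le_max_right (alphaNum G2) (Fintype.card V2 - c + 1))
    · -- S avoids the apex; its trace is independent
      set T := Sum.inr ⁻¹' S with hT
      have hindep : T.Pairwise (fun a b => ¬ G2.Adj a b) := indep_of_conv hconv hv
      have hSrepr : S = Sum.inr '' T := by
        ext u
        cases u with
        | inl t => cases t; simp [hv]
        | inr x => simp [hT]
      have hcard : S.ncard = T.ncard := by
        rw [hSrepr, Set.ncard_image_of_injective _ Sum.inr_injective]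
      rw [hcard]
      exact le_trans (le_csSup hbddB ⟨T, hindep, rfl⟩)
        (le_max_left (alphaNum G2) (Fintype.card V2 - c + 1))
  · rw [max_le_iff]
    constructor
    · apply csSup_le'
      rintro m ⟨T, hTind, rfl⟩
      apply le_csSup hbddA
      refine ⟨Sum.inr '' T, conv_of_indep hTind, ?_,
        Set.ncard_image_of_injective _ Sum.inr_injective⟩
      intro h
      have : (Sum.inl () : Unit ⊕ V2) ∈ Sum.inr '' T := h ▸ Set.mem_univ _
      simp at this
    · apply le_csSup hbddA
      set T := (K0.supp)ᶜ with hT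
      have hclosed : ∀ a b, G2.Adj a b → a ∈ T → b ∈ T := by
        intro a b hab ha hb
        apply ha
        rw [ConnectedComponent.mem_supp_iff] at hb ⊢
        rw [← hb]
        exact ConnectedComponent.sound hab.reachable
      obtain ⟨y, hy⟩ := K0.exists_rep
      have hdisj : Disjoint ({Sum.inl ()} : Set (Unit ⊕ V2)) (Sum.inr '' T) := by
        simp [Set.disjoint_left]
      refine ⟨{Sum.inl ()} ∪ Sum.inr '' T, conv_of_closed hclosed, ?_, ?_⟩
      · intro h
        have hmem : (Sum.inr y : Unit ⊕ V2) ∈ {Sum.inl ()} ∪ Sum.inr '' T :=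
          h ▸ Set.mem_univ _
        rcases hmem with h' | ⟨z, hz, hzz⟩
        · simp at h'
        · cases Sum.inr_injective hzz
          exact hz (by rw [ConnectedComponent.mem_supp_iff]; exact hy)
      · rw [Set.ncard_union_eq hdisj (Set.toFinite _) (Set.toFinite _),
          Set.ncard_singleton, Set.ncard_image_of_injective _ Sum.inr_injective]
        have h1 := hcompl K0.supp
        have h2 : T.ncard + c = Fintype.card V2 := by rw [hT, hK0]; omega
        omega
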